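/- Let q = (2e+1)·t with integers e ≥ 0 and t ≥ 2, let n ≥ 1, let C be an additive subgroup of Z_q^n that is a perfect e-code, and let x ∈ Z_q^n be such that t·x ∈ C. Then the additive subgroup of Z_q^{n+1} generated by C × {0} together with the element (x, 2e+1 mod q) is a perfect e-code in Z_q^{n+1}. -/

import Mathlib

/-- Lee distance on `ZMod q`. -/
def leeDist {q : ℕ} (x y : ZMod q) : ℕ := min (x - y).val (q - (x - y).val)

/-- Maximum (Chebyshev) distance on `(ZMod q)^n`. -/
def maxDist {q n : ℕ} (x y : Fin n → ZMod q) : ℕ :=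
  Finset.univ.sup fun i => leeDist (x i) (y i)

/-- `C` is a perfect `e`-code: every point is within distance `e` of exactly one codeword. -/
def IsPerfectCode {q n : ℕ} (e : ℕ) (C : Set (Fin n → ZMod q)) : Prop :=
  ∀ x : Fin n → ZMod q, ∃! c, c ∈ C ∧ maxDist x c ≤ e

lemma leeDist_le_of_small {q e : ℕ} (hq : 2*e < q) {a b : ZMod q} (d : ℤ)
    (hd : d.natAbs ≤ e) (hab : a - b = (d : ZMod q)) : leeDist a b ≤ e := by
  haveI : NeZero q := ⟨by omega⟩
  unfold leeDist
  rw [hab]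
  rcases le_or_gt 0 d with h0 | h0
  · lift d to ℕ using h0
    simp only [Int.natAbs_natCast] at hd
    rw [Int.cast_natCast, ZMod.val_natCast, Nat.mod_eq_of_lt (by omega)]
    omega
  · set m := d.natAbs with hm
    have hd' : d = -(m : ℤ) := by omega
    have hm1 : 1 ≤ m := by omega
    have hcast : (d : ZMod q) = -((m : ℕ) : ZMod q) := by rw [hd']; push_cast; ring
    have hmv : ((m : ℕ) : ZMod q).val = m := by
      rw [ZMod.val_natCast, Nat.mod_eq_of_lt (by omega)]
    have hne : ((m : ℕ) : ZMod q) ≠ 0 := by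
      rw [Ne, ZMod.natCast_eq_zero_iff]
      intro h
      have := Nat.le_of_dvd (by omega) h
      omega
    rw [hcast, ZMod.neg_val, if_neg hne, hmv]
    omega

lemma exists_small_of_lee {q e : ℕ} [NeZero q] {a b : ZMod q} (h : leeDist a b ≤ e) :
    ∃ d : ℤ, d.natAbs ≤ e ∧ a - b = (d : ZMod q) := by
  have hv : (a - b).val < q := ZMod.val_lt _
  have hc : ((a - b).val : ZMod q) = a - b := ZMod.natCast_zmod_val _
  unfold leeDist at h
  rcases le_or_gt ((a-b).val) e with h1 | h1
  · exact ⟨(a - b).val, by omega, by rw [Int.cast_natCast, hc]⟩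
  · refine ⟨((a-b).val : ℤ) - q, by omega, ?_⟩
    push_cast
    rw [hc, ZMod.natCast_self]
    ring

lemma int_core (e t : ℕ) (ht : 2 ≤ t) (m D : ℤ) (hD : D.natAbs ≤ 2*e)
    (h : ((2*e+1)*t : ℤ) ∣ m*(2*e+1) - D) : (t:ℤ) ∣ m ∧ D = 0 := by
  set Q : ℤ := (2*e+1)*t with hQ
  have hQ0 : 0 < Q := by positivity
  set r := m % t with hr
  have hr0 : 0 ≤ r := Int.emod_nonneg m (by omega)
  have hrt : r < t := Int.emod_lt_of_pos m (by omega)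
  have hdvd : (t:ℤ) ∣ m - r := Int.dvd_self_sub_of_emod_eq rfl
  obtain ⟨s, hs⟩ := hdvd
  have h2 : Q ∣ r*(2*e+1) - D := by
    have : m*(2*e+1) - D = Q*s + (r*(2*e+1) - D) := by rw [hQ]; nlinarith [hs]
    obtain ⟨c, hc⟩ := h
    exact ⟨c - s, by linarith [hc, this]⟩
  have hDl : -(2*(e:ℤ)) ≤ D := by omega
  have hDu : D ≤ 2*(e:ℤ) := by omega
  have hru : r * (2*(e:ℤ)+1) ≤ ((t:ℤ)-1) * (2*(e:ℤ)+1) :=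
    mul_le_mul_of_nonneg_right (by omega) (by positivity)
  have hrl : 0 ≤ r * (2*(e:ℤ)+1) := mul_nonneg hr0 (by positivity)
  have hz : r*(2*e+1) - D = 0 := by
    refine Int.eq_zero_of_abs_lt_dvd h2 ?_
    rw [abs_lt, hQ]
    constructor <;> nlinarith
  have hr0' : r = 0 := by nlinarith
  rw [hr0'] at hz
  exact ⟨⟨s, by linarith⟩, by linarith⟩

lemma lee_exists (e t q : ℕ) (ht : 2 ≤ t) (hq : q = (2*e+1)*t) (y : ZMod q) :
    ∃ k : ℤ, leeDist y (((k * (2*e+1) : ℤ)) : ZMod q) ≤ e := by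
  have hq2 : 2*e < q := by nlinarith
  haveI : NeZero q := ⟨by omega⟩
  set v := y.val with hv
  have hvq : v < q := ZMod.val_lt y
  obtain ⟨k, hk1, hk2⟩ : ∃ k : ℕ, (2*e+1)*k ≤ v + e ∧ v + e < (2*e+1)*k + (2*e+1) := by
    refine ⟨(v + e) / (2*e+1), ?_, ?_⟩ <;>
    · have h1 := Nat.div_add_mod (v + e) (2*e+1)
      have h2 : (v + e) % (2*e+1) < 2*e+1 := Nat.mod_lt _ (by omega)
      omega
  have hy : ((v : ℕ) : ZMod q) = y := ZMod.natCast_zmod_val y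
  refine ⟨(k : ℤ), leeDist_le_of_small hq2 ((v : ℤ) - (((2*e+1)*k : ℕ) : ℤ)) (by omega) ?_⟩
  push_cast
  rw [hy]
  ring

lemma lee_unique (e t q : ℕ) (ht : 2 ≤ t) (hq : q = (2*e+1)*t) (y : ZMod q) (k1 k2 : ℤ)
    (h1 : leeDist y (((k1 * (2*e+1) : ℤ)) : ZMod q) ≤ e)
    (h2 : leeDist y (((k2 * (2*e+1) : ℤ)) : ZMod q) ≤ e) :
    (t:ℤ) ∣ (k1 - k2) ∧ (((k1 * (2*e+1) : ℤ)) : ZMod q) = (((k2 * (2*e+1) : ℤ)) : ZMod q) := by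
  haveI : NeZero q := ⟨by rw [hq]; positivity⟩
  obtain ⟨d1, hd1, he1⟩ := exists_small_of_lee h1
  obtain ⟨d2, hd2, he2⟩ := exists_small_of_lee h2
  have hz : (((k1 - k2) * (2*e+1) - (d2 - d1) : ℤ) : ZMod q) = 0 := by
    push_cast
    push_cast at he1 he2
    linear_combination he2 - he1
  rw [ZMod.intCast_zmod_eq_zero_iff_dvd] at hz
  have hcore := int_core e t ht (k1 - k2) (d2 - d1) (by omega) (by
    rw [hq] at hz; push_cast at hz ⊢; convert hz using 2 <;> ring)
  refine ⟨hcore.1, ?_⟩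
  have hdd : d1 = d2 := by omega
  rw [hdd] at he1
  rw [← sub_eq_zero]
  push_cast
  push_cast at he1 he2
  linear_combination he2 - he1

lemma snoc_add' {q n : ℕ} (a b : Fin n → ZMod q) (u v : ZMod q) :
    Fin.snoc a u + Fin.snoc b v = (Fin.snoc (a + b) (u + v) : Fin (n+1) → ZMod q) := by
  funext i
  refine Fin.lastCases ?_ ?_ i <;> simp

lemma snoc_neg' {q n : ℕ} (a : Fin n → ZMod q) (u : ZMod q) :
    -(Fin.snoc a u : Fin (n+1) → ZMod q) = Fin.snoc (-a) (-u) := by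
  funext i
  refine Fin.lastCases ?_ ?_ i <;> simp

lemma snoc_zsmul' {q n : ℕ} (k : ℤ) (a : Fin n → ZMod q) (u : ZMod q) :
    k • (Fin.snoc a u : Fin (n+1) → ZMod q) = Fin.snoc (k • a) (k • u) := by
  funext i
  refine Fin.lastCases ?_ ?_ i <;> simp

lemma maxDist_sub' {q n : ℕ} (a b z : Fin n → ZMod q) :
    maxDist (a - z) (b - z) = maxDist a b := by
  simp only [maxDist, leeDist, Pi.sub_apply, sub_sub_sub_cancel_right]

lemma maxDist_snoc_le {q n e : ℕ} (z : Fin (n+1) → ZMod q) (c : Fin n → ZMod q) (a : ZMod q) :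
    maxDist z (Fin.snoc c a) ≤ e ↔
      maxDist (Fin.init z) c ≤ e ∧ leeDist (z (Fin.last n)) a ≤ e := by
  simp only [maxDist, Finset.sup_le_iff, Finset.mem_univ, forall_true_left]
  constructor
  · intro h
    refine ⟨fun i => ?_, ?_⟩
    · have := h i.castSucc
      simpa [Fin.init] using this
    · simpa using h (Fin.last n)
  · rintro ⟨h1, h2⟩ i
    refine Fin.lastCases ?_ (fun j => ?_) i
    · simpa using h2
    · have := h1 j
      simpa [Fin.init] using this

lemma mem_closure_char {e q n : ℕ} (C : AddSubgroup (Fin n → ZMod q)) (x : Fin n → ZMod q)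
    (z : Fin (n+1) → ZMod q) :
    z ∈ AddSubgroup.closure
        (((fun c : Fin n → ZMod q => Fin.snoc c (0 : ZMod q)) '' (C : Set (Fin n → ZMod q)) ∪
          {Fin.snoc x ((2 * e + 1 : ℕ) : ZMod q)} : Set (Fin (n+1) → ZMod q))) ↔
    ∃ c ∈ C, ∃ k : ℤ, z = Fin.snoc (c + k • x) (((k * (2*e+1) : ℤ)) : ZMod q) := by
  have hw : ∀ k : ℤ, k • ((2 * e + 1 : ℕ) : ZMod q) = (((k * (2*e+1) : ℤ)) : ZMod q) := by
    intro k; rw [zsmul_eq_mul]; push_cast; ring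
  have hz0 : (0 : Fin (n+1) → ZMod q) = Fin.snoc (0 : Fin n → ZMod q) (0 : ZMod q) := by
    funext i; refine Fin.lastCases ?_ ?_ i <;> simp
  constructor
  · intro hz
    induction hz using AddSubgroup.closure_induction with
    | mem w hw' =>
      rcases hw' with ⟨c, hc, rfl⟩ | hw'
      · refine ⟨c, hc, 0, ?_⟩
        congr 1 <;> simp
      · simp only [Set.mem_singleton_iff] at hw'
        refine ⟨0, zero_mem _, 1, ?_⟩
        rw [hw']
        congr 1
        all_goals first | simp | (push_cast; ring)
    | zero =>
      refine ⟨0, zero_mem _, 0, ?_⟩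
      rw [hz0]
      congr 1 <;> simp
    | add a b ha hb iha ihb =>
      obtain ⟨c1, hc1, k1, rfl⟩ := iha
      obtain ⟨c2, hc2, k2, rfl⟩ := ihb
      refine ⟨c1 + c2, add_mem hc1 hc2, k1 + k2, ?_⟩
      have hv : (c1 + k1 • x) + (c2 + k2 • x) = (c1 + c2) + (k1 + k2) • x := by
        rw [add_zsmul]; abel
      have hs : ((((k1 * (2*e+1) : ℤ)) : ZMod q) + (((k2 * (2*e+1) : ℤ)) : ZMod q))
          = (((k1 + k2) * (2*e+1) : ℤ) : ZMod q) := by push_cast; ring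
      rw [snoc_add', hv, hs]
    | neg a ha iha =>
      obtain ⟨c, hc, k, rfl⟩ := iha
      refine ⟨-c, neg_mem hc, -k, ?_⟩
      have hv : -(c + k • x) = -c + (-k) • x := by rw [neg_zsmul]; abel
      have hs : (-((((k * (2*e+1) : ℤ)) : ZMod q)))
          = ((((-k) * (2*e+1) : ℤ)) : ZMod q) := by push_cast; ring
      rw [snoc_neg', hv, hs]
  · rintro ⟨c, hc, k, rfl⟩
    have h1 : (Fin.snoc c (0 : ZMod q) : Fin (n+1) → ZMod q) ∈ AddSubgroup.closure
        (((fun c : Fin n → ZMod q => Fin.snoc c (0 : ZMod q)) '' (C : Set (Fin n → ZMod q)) ∪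
          {Fin.snoc x ((2 * e + 1 : ℕ) : ZMod q)} : Set (Fin (n+1) → ZMod q))) :=
      AddSubgroup.subset_closure (Set.mem_union_left _ (Set.mem_image_of_mem _ hc))
    have h2 : (Fin.snoc x ((2 * e + 1 : ℕ) : ZMod q) : Fin (n+1) → ZMod q) ∈
        AddSubgroup.closure
        (((fun c : Fin n → ZMod q => Fin.snoc c (0 : ZMod q)) '' (C : Set (Fin n → ZMod q)) ∪
          {Fin.snoc x ((2 * e + 1 : ℕ) : ZMod q)} : Set (Fin (n+1) → ZMod q))) :=
      AddSubgroup.subset_closure (Set.mem_union_right _ rfl)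
    have hmem := AddSubgroup.add_mem _ h1 (AddSubgroup.zsmul_mem _ h2 k)
    convert hmem using 1
    rw [snoc_zsmul', snoc_add', hw, zero_add]

/-- Linear construction: from a linear perfect `e`-code `C ⊆ (ZMod q)^n` and
`x` with `t·x ∈ C`, the subgroup of `(ZMod q)^{n+1}` generated by `C × {0}`
and `(x, 2e+1)` is a perfect `e`-code. -/
theorem stmt12 (e t q n : ℕ) (ht : 2 ≤ t) (hq : q = (2 * e + 1) * t) (hn : 1 ≤ n)
    (C : AddSubgroup (Fin n → ZMod q))
    (hC : IsPerfectCode e (C : Set (Fin n → ZMod q)))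
    (x : Fin n → ZMod q) (hx : t • x ∈ C) :
    IsPerfectCode e
      (((AddSubgroup.closure
        (((fun c : Fin n → ZMod q => Fin.snoc c (0 : ZMod q)) ''
            (C : Set (Fin n → ZMod q)) ∪
          {Fin.snoc x ((2 * e + 1 : ℕ) : ZMod q)} :
          Set (Fin (n + 1) → ZMod q)))) : AddSubgroup (Fin (n + 1) → ZMod q)) :
        Set (Fin (n + 1) → ZMod q)) := by
  intro z
  obtain ⟨k, hk⟩ := lee_exists e t q ht hq (z (Fin.last n))
  obtain ⟨c, ⟨hcC, hcd⟩, hcu⟩ := hC (Fin.init z - k • x)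
  refine ⟨Fin.snoc (c + k • x) (((k * (2*e+1) : ℤ)) : ZMod q), ⟨?_, ?_⟩, ?_⟩
  · exact (mem_closure_char C x _).mpr ⟨c, hcC, k, rfl⟩
  · rw [maxDist_snoc_le]
    refine ⟨?_, hk⟩
    have h := maxDist_sub' (Fin.init z) (c + k • x) (k • x)
    rw [add_sub_cancel_right] at h
    rw [← h]
    exact hcd
  · rintro d ⟨hdD, hdd⟩
    obtain ⟨c2, hc2, k2, rfl⟩ := (mem_closure_char C x d).mp hdD
    rw [maxDist_snoc_le] at hdd
    obtain ⟨hdd1, hdd2⟩ := hdd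
    obtain ⟨hdvd, heq⟩ := lee_unique e t q ht hq (z (Fin.last n)) k2 k hdd2 hk
    obtain ⟨s, hs⟩ := hdvd
    have hxs : (k2 - k) • x ∈ C := by
      have h1 : (k2 - k) • x = s • ((t : ℕ) • x) := by
        rw [hs, mul_comm, mul_zsmul, natCast_zsmul]
      rw [h1]
      exact AddSubgroup.zsmul_mem _ hx s
    have hmem2 : c2 + (k2 - k) • x ∈ C := add_mem hc2 hxs
    have hdist2 : maxDist (Fin.init z - k • x) (c2 + (k2 - k) • x) ≤ e := by
      have h2 := maxDist_sub' (Fin.init z) (c2 + k2 • x) (k • x)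
      have h3 : c2 + k2 • x - k • x = c2 + (k2 - k) • x := by
        rw [sub_zsmul]; abel
      rw [h3] at h2
      rw [h2]
      exact hdd1
    have hce : c2 + (k2 - k) • x = c := hcu _ ⟨hmem2, hdist2⟩
    have hv : c2 + k2 • x = c + k • x := by
      rw [← hce, sub_zsmul]; abel
    rw [hv, heq]
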